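/- Fix n ≥ 1. For every element σ of the Houghton group H_n there is a unique vector (m₁(σ),…,m_n(σ)) ∈ ℤ^n of eventual translation amounts, and these satisfy m₁(σ)+⋯+m_n(σ) = 0. Moreover the map T : H_n → ℤ^n, T(σ) = (m₁(σ),…,m_n(σ)), is a group homomorphism whose kernel is exactly the subgroup of finitely supported elements of H_n, and whose image is exactly the sublattice {(v₁,…,v_n) ∈ ℤ^n : v₁+⋯+v_n = 0}. -/

import Mathlib

/-- A permutation `σ` of `Fin n × ℕ` is an *eventual translation* if there are integers
`m₁, …, m_n` and a finite set `F ⊆ Fin n × ℕ` such that `σ (i, k) = (i, k + mᵢ)` for all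
`(i, k) ∉ F`. -/
def IsEventualTranslation {n : ℕ} (σ : Equiv.Perm (Fin n × ℕ)) : Prop :=
  ∃ (m : Fin n → ℤ) (F : Finset (Fin n × ℕ)),
    ∀ p : Fin n × ℕ, p ∉ F →
      (σ p).1 = p.1 ∧ ((σ p).2 : ℤ) = (p.2 : ℤ) + m p.1

/-- The Houghton group `H_n`: the subgroup of `Equiv.Perm (Fin n × ℕ)` consisting of the
eventual translations. -/
def HoughtonGroup (n : ℕ) : Subgroup (Equiv.Perm (Fin n × ℕ)) where
  carrier := {σ | IsEventualTranslation σ}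
  one_mem' := ⟨0, ∅, fun p _ => by simp⟩
  mul_mem' := by
    rintro a b ⟨m, F, hF⟩ ⟨m', F', hF'⟩
    refine ⟨m + m', F' ∪ F.preimage b b.injective.injOn, fun p hp => ?_⟩
    simp only [Finset.mem_union, Finset.mem_preimage, not_or] at hp
    obtain ⟨hp1, hp2⟩ := hp
    obtain ⟨hb1, hb2⟩ := hF' p hp1
    obtain ⟨ha1, ha2⟩ := hF (b p) hp2
    refine ⟨by simp [Equiv.Perm.mul_apply, ha1, hb1], ?_⟩
    simp only [Equiv.Perm.mul_apply, Pi.add_apply]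
    rw [ha2, hb2, hb1]
    ring
  inv_mem' := by
    rintro a ⟨m, F, hF⟩
    refine ⟨-m, F.image a, fun p hp => ?_⟩
    have hmem : a⁻¹ p ∉ F := by
      intro h
      exact hp (Finset.mem_image.mpr ⟨a⁻¹ p, h, Equiv.apply_symm_apply a p⟩)
    obtain ⟨h1, h2⟩ := hF (a⁻¹ p) hmem
    rw [show a (a⁻¹ p) = p from Equiv.apply_symm_apply a p] at h1 h2
    refine ⟨h1.symm, ?_⟩
    rw [← h1] at h2
    simp only [Pi.neg_apply]
    omega

/-- `m : Fin n → ℤ` is a vector of eventual translation amounts for the permutation `σ`. -/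
def IsTranslationVector {n : ℕ} (σ : Equiv.Perm (Fin n × ℕ)) (m : Fin n → ℤ) : Prop :=
  ∃ F : Finset (Fin n × ℕ),
    ∀ p : Fin n × ℕ, p ∉ F →
      (σ p).1 = p.1 ∧ ((σ p).2 : ℤ) = (p.2 : ℤ) + m p.1


section HoughtonAux
set_option linter.unnecessarySeqFocus false

lemma htv_unique {n : ℕ} {σ : Equiv.Perm (Fin n × ℕ)} {m m' : Fin n → ℤ}
    (h : IsTranslationVector σ m) (h' : IsTranslationVector σ m') : m = m' := by
  obtain ⟨F, hF⟩ := h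
  obtain ⟨F', hF'⟩ := h'
  funext i
  obtain ⟨N, hN1, hN2⟩ : ∃ N : ℕ, ((i, N) : Fin n × ℕ) ∉ F ∧ ((i, N) : Fin n × ℕ) ∉ F' := by
    refine ⟨(F ∪ F').sup Prod.snd + 1, fun h => ?_, fun h => ?_⟩
    · have := Finset.le_sup (f := Prod.snd) (Finset.mem_union_left F' h)
      simp only at this
      omega
    · have := Finset.le_sup (f := Prod.snd) (Finset.mem_union_right F h)
      simp only at this
      omega
  have h1 := (hF (i, N) hN1).2
  have h2 := (hF' (i, N) hN2).2
  dsimp only at h1 h2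
  omega

lemma htv_mul {n : ℕ} {a b : Equiv.Perm (Fin n × ℕ)} {m m' : Fin n → ℤ}
    (ha : IsTranslationVector a m) (hb : IsTranslationVector b m') :
    IsTranslationVector (a * b) (m + m') := by
  obtain ⟨F, hF⟩ := ha
  obtain ⟨F', hF'⟩ := hb
  refine ⟨F' ∪ F.preimage b b.injective.injOn, fun p hp => ?_⟩
  simp only [Finset.mem_union, Finset.mem_preimage, not_or] at hp
  obtain ⟨hp1, hp2⟩ := hp
  obtain ⟨hb1, hb2⟩ := hF' p hp1
  obtain ⟨ha1, ha2⟩ := hF (b p) hp2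
  refine ⟨by simp [Equiv.Perm.mul_apply, ha1, hb1], ?_⟩
  simp only [Equiv.Perm.mul_apply, Pi.add_apply]
  rw [ha2, hb2, hb1]
  ring

lemma htv_one {n : ℕ} : IsTranslationVector (1 : Equiv.Perm (Fin n × ℕ)) 0 :=
  ⟨∅, fun p _ => by simp⟩

lemma htv_sum_zero {n : ℕ} {σ : Equiv.Perm (Fin n × ℕ)} {m : Fin n → ℤ}
    (h : IsTranslationVector σ m) : ∑ i, m i = 0 := by
  obtain ⟨F, hF⟩ := h
  obtain ⟨M, hM⟩ : ∃ M : ℕ, ∀ p ∈ F, (σ p).2 < M := by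
    refine ⟨(F.image (fun p => (σ p).2)).sup id + 1, fun p hp => ?_⟩
    have := Finset.le_sup (f := id) (Finset.mem_image_of_mem (fun p => (σ p).2) hp)
    simp only [id] at this
    omega
  obtain ⟨N, hNF, hNM⟩ : ∃ N : ℕ, (∀ p ∈ F, p.2 < N) ∧ ∀ i : Fin n, (M : ℤ) ≤ (N : ℤ) + m i := by
    refine ⟨F.sup Prod.snd + 1 + Finset.univ.sup (fun i => ((M : ℤ) - m i).toNat),
      fun p hp => ?_, fun i => ?_⟩
    · have := Finset.le_sup (f := Prod.snd) hp
      omega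
    · have h1 := Finset.le_sup (f := fun i => ((M : ℤ) - m i).toNat) (Finset.mem_univ i)
      have h2 : (M : ℤ) - m i ≤ (((M : ℤ) - m i).toNat : ℤ) := Int.self_le_toNat _
      push_cast
      omega
  set A : Finset (Fin n × ℕ) := Finset.univ ×ˢ Finset.range N with hA
  set B : Finset (Fin n × ℕ) :=
    Finset.univ.biUnion (fun i => (Finset.range ((N : ℤ) + m i).toNat).image (fun k => (i, k)))
    with hB
  have hmemB : ∀ x : Fin n × ℕ, x ∈ B ↔ ((x.2 : ℤ) < (N : ℤ) + m x.1) := by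
    intro x
    simp only [hB, Finset.mem_biUnion, Finset.mem_univ, true_and, Finset.mem_image,
      Finset.mem_range]
    constructor
    · rintro ⟨i, k, hk, rfl⟩
      have := Int.toNat_of_nonneg (a := (N : ℤ) + m i) (by have := hNM i; omega)
      simp only
      omega
    · intro hx
      refine ⟨x.1, x.2, ?_, rfl⟩
      have := Int.toNat_of_nonneg (a := (N : ℤ) + m x.1) (by have := hNM x.1; omega)
      omega
  have himg : A.image σ = B := by
    apply Finset.Subset.antisymm
    · intro x hx
      obtain ⟨p, hp, rfl⟩ := Finset.mem_image.mp hx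
      have hpA : p.2 < N := by
        simp only [hA, Finset.mem_product, Finset.mem_range] at hp
        exact hp.2
      rw [hmemB]
      by_cases hpF : p ∈ F
      · have := hM p hpF
        have := hNM (σ p).1
        omega
      · obtain ⟨h1, h2⟩ := hF p hpF
        rw [h1]
        omega
    · intro x hx
      rw [hmemB] at hx
      rw [Finset.mem_image]
      refine ⟨σ⁻¹ x, ?_, Equiv.apply_symm_apply σ x⟩
      by_contra hq
      simp only [hA, Finset.mem_product, Finset.mem_univ, true_and, Finset.mem_range,
        not_lt] at hq
      have hqF : σ⁻¹ x ∉ F := fun h => by have := hNF _ h; omega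
      obtain ⟨h1, h2⟩ := hF (σ⁻¹ x) hqF
      rw [show σ (σ⁻¹ x) = x from Equiv.apply_symm_apply σ x] at h1 h2
      have := hNM (σ⁻¹ x).1
      rw [h1] at hx
      omega
  have hcardA : (A.image σ).card = n * N := by
    rw [Finset.card_image_of_injective _ σ.injective, hA, Finset.card_product,
      Finset.card_range, Finset.card_univ, Fintype.card_fin]
  have hcardB : B.card = ∑ i : Fin n, ((N : ℤ) + m i).toNat := by
    rw [hB, Finset.card_biUnion]
    · refine Finset.sum_congr rfl fun i _ => ?_
      rw [Finset.card_image_of_injective, Finset.card_range]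
      intro a b hab
      simpa using hab
    · intro i _ j _ hij
      simp only [Finset.disjoint_left, Finset.mem_image]
      rintro a ⟨k, _, rfl⟩ ⟨k', _, h⟩
      exact hij (by simpa using (Prod.mk.injEq .. ▸ h).1.symm) |>.elim
  have hkey : (n * N : ℤ) = ∑ i : Fin n, ((N : ℤ) + m i) := by
    have := himg ▸ hcardA
    rw [hcardB] at this
    have hcast : ((∑ i : Fin n, ((N : ℤ) + m i).toNat : ℕ) : ℤ)
        = ∑ i : Fin n, ((N : ℤ) + m i) := by
      push_cast
      refine Finset.sum_congr rfl fun i _ => ?_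
      exact Int.toNat_of_nonneg (by have := hNM i; omega)
    rw [← hcast, this]
    push_cast
    ring
  rw [Finset.sum_add_distrib, Finset.sum_const, Finset.card_univ, Fintype.card_fin] at hkey
  simp only [nsmul_eq_mul] at hkey
  omega

def houghtonGen {n : ℕ} [NeZero n] (i : Fin n) (hi : i ≠ 0) : Equiv.Perm (Fin n × ℕ) where
  toFun p := if p.1 = 0 then (if p.2 = 0 then (i, 0) else (0, p.2 - 1))
             else if p.1 = i then (i, p.2 + 1) else p
  invFun p := if p.1 = i then (if p.2 = 0 then (0, 0) else (i, p.2 - 1))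
              else if p.1 = 0 then (0, p.2 + 1) else p
  left_inv := by
    rintro ⟨j, k⟩
    by_cases hj0 : j = 0
    · subst hj0
      by_cases hk : k = 0 <;> simp [hk, hi, hi.symm] <;> omega
    · by_cases hji : j = i
      · subst hji
        simp [hj0]
      · simp [hj0, hji]
  right_inv := by
    rintro ⟨j, k⟩
    by_cases hji : j = i
    · subst hji
      by_cases hk : k = 0 <;> simp [hk, hi, hi.symm] <;> omega
    · by_cases hj0 : j = 0
      · subst hj0
        simp [hji, hi.symm]
      · simp [hj0, hji]

lemma houghtonGen_vec {n : ℕ} [NeZero n] (i : Fin n) (hi : i ≠ 0) :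
    IsTranslationVector (houghtonGen i hi) (Pi.single i 1 - Pi.single 0 1) := by
  refine ⟨{((0 : Fin n), 0)}, ?_⟩
  rintro ⟨j, k⟩ hp
  simp only [Finset.mem_singleton, Prod.mk.injEq, not_and] at hp
  by_cases hj0 : j = 0
  · subst hj0
    have hk : k ≠ 0 := hp rfl
    simp only [houghtonGen, Equiv.coe_fn_mk, if_pos rfl, if_neg hk]
    refine ⟨rfl, ?_⟩
    simp [Pi.single_apply, hi]
    omega
  · by_cases hji : j = i
    · subst hji
      simp only [houghtonGen, Equiv.coe_fn_mk, if_neg hj0, if_pos rfl]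
      simp [Pi.single_apply, hj0]
    · simp only [houghtonGen, Equiv.coe_fn_mk, if_neg hj0, if_neg hji]
      simp [Pi.single_apply, hji, hj0]

lemma zero_sum_decomp {n : ℕ} [NeZero n] (v : Fin n → ℤ) (hv : ∑ i, v i = 0) :
    v = ∑ i ∈ Finset.univ.erase 0, v i • (Pi.single i 1 - Pi.single 0 1) := by
  have hsum := Finset.sum_erase_add Finset.univ v (Finset.mem_univ (0 : Fin n))
  rw [hv] at hsum
  funext j
  rw [Finset.sum_apply]
  simp only [Pi.smul_apply, Pi.sub_apply, Pi.single_apply, smul_eq_mul]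
  by_cases hj : j = 0
  · subst hj
    rw [Finset.sum_congr rfl (g := fun i => -v i) (fun i hi => ?_)]
    · rw [Finset.sum_neg_distrib]
      omega
    · rw [Finset.mem_erase] at hi
      rw [if_neg (Ne.symm hi.1), if_pos rfl]
      ring
  · rw [Finset.sum_congr rfl (g := fun i => if j = i then v i else 0) (fun i hi => ?_)]
    · rw [Finset.sum_ite_eq]
      simp [Finset.mem_erase, hj]
    · rw [if_neg hj]
      by_cases hij : j = i <;> simp [hij]

lemma htv_mem_houghton {n : ℕ} {σ : Equiv.Perm (Fin n × ℕ)} {m : Fin n → ℤ}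
    (h : IsTranslationVector σ m) : σ ∈ HoughtonGroup n := by
  obtain ⟨F, hF⟩ := h
  exact ⟨m, F, hF⟩

end HoughtonAux

/-- For every element `σ` of the Houghton group `H_n` (`n ≥ 1`) there is a unique vector
`(m₁(σ), …, m_n(σ)) ∈ ℤ^n` of eventual translation amounts; these sum to zero; the
resulting map `T : H_n → ℤ^n` is a group homomorphism, its kernel consists exactly of the
finitely supported elements of `H_n`, and its image is exactly the zero-sum sublattice
`{v ∈ ℤ^n : v₁ + ⋯ + v_n = 0}`. -/
theorem houghton_translation_homomorphism (n : ℕ) (hn : 1 ≤ n) :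
    ∃ T : HoughtonGroup n → (Fin n → ℤ),
      (∀ σ : HoughtonGroup n,
        IsTranslationVector (σ : Equiv.Perm (Fin n × ℕ)) (T σ) ∧
        ∀ m : Fin n → ℤ, IsTranslationVector (σ : Equiv.Perm (Fin n × ℕ)) m → m = T σ) ∧
      (∀ σ : HoughtonGroup n, ∑ i, T σ i = 0) ∧
      (∀ σ τ : HoughtonGroup n, T (σ * τ) = T σ + T τ) ∧
      (∀ σ : HoughtonGroup n,
        (T σ = 0 ↔ {x : Fin n × ℕ | (σ : Equiv.Perm (Fin n × ℕ)) x ≠ x}.Finite)) ∧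
      Set.range T = {v : Fin n → ℤ | ∑ i, v i = 0} := by
  haveI : NeZero n := ⟨by omega⟩
  have hex : ∀ σ : HoughtonGroup n,
      ∃ m : Fin n → ℤ, IsTranslationVector (σ : Equiv.Perm (Fin n × ℕ)) m := by
    rintro ⟨σ, m, F, hF⟩
    exact ⟨m, F, hF⟩
  set T : HoughtonGroup n → (Fin n → ℤ) := fun σ => (hex σ).choose with hTdef
  have hT : ∀ σ : HoughtonGroup n,
      IsTranslationVector (σ : Equiv.Perm (Fin n × ℕ)) (T σ) := fun σ => (hex σ).choose_spec
  have hhom : ∀ σ τ : HoughtonGroup n, T (σ * τ) = T σ + T τ := by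
    intro σ τ
    exact htv_unique (hT (σ * τ)) (htv_mul (hT σ) (hT τ))
  have hone : T 1 = 0 := htv_unique (hT 1) htv_one
  refine ⟨T, fun σ => ⟨hT σ, fun m hm => htv_unique hm (hT σ)⟩,
    fun σ => htv_sum_zero (hT σ), hhom, ?_, ?_⟩
  · intro σ
    constructor
    · intro h0
      obtain ⟨F, hF⟩ := hT σ
      rw [h0] at hF
      refine Set.Finite.subset F.finite_toSet ?_
      intro x hx
      by_contra hxF
      obtain ⟨h1, h2⟩ := hF x hxF
      simp only [Pi.zero_apply, add_zero, Nat.cast_inj] at h2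
      exact hx (Prod.ext h1 h2)
    · intro hfin
      have h0 : IsTranslationVector (σ : Equiv.Perm (Fin n × ℕ)) 0 := by
        refine ⟨hfin.toFinset, fun p hp => ?_⟩
        rw [Set.Finite.mem_toFinset, Set.mem_setOf_eq, not_not] at hp
        simp [hp]
      exact htv_unique (hT σ) h0
  · ext v
    simp only [Set.mem_range, Set.mem_setOf_eq]
    constructor
    · rintro ⟨σ, rfl⟩
      exact htv_sum_zero (hT σ)
    · intro hv
      let R : AddSubgroup (Fin n → ℤ) :=
        { carrier := Set.range T
          zero_mem' := ⟨1, hone⟩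
          add_mem' := by
            rintro a b ⟨σ, rfl⟩ ⟨τ, rfl⟩
            exact ⟨σ * τ, hhom σ τ⟩
          neg_mem' := by
            rintro a ⟨σ, rfl⟩
            refine ⟨σ⁻¹, ?_⟩
            have h := hhom σ⁻¹ σ
            rw [inv_mul_cancel, hone] at h
            funext i
            have h2 := congrFun h i
            simp only [Pi.add_apply, Pi.zero_apply, Pi.neg_apply] at h2 ⊢
            omega }
      show v ∈ R
      rw [zero_sum_decomp v hv]
      refine AddSubgroup.sum_mem R fun i hi => ?_
      rw [Finset.mem_erase] at hi
      refine AddSubgroup.zsmul_mem R ?_ _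
      refine ⟨⟨houghtonGen i hi.1, htv_mem_houghton (houghtonGen_vec i hi.1)⟩, ?_⟩
      exact htv_unique (hT _) (houghtonGen_vec i hi.1)
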